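/- arXiv:1403.8080 — 3 statements merged into one kernel-verified Lean document; each statement's English description precedes it below -/
import Mathlib

section
/- Let s be a real number and n a natural number. Then the sum over k from 0 to ⌊n/2⌋ of (s^k/(2k)!!)·D^{2k}H_n(x,s) equals x^n as polynomials in x, where D denotes differentiation of polynomials with respect to x and D^{2k} its (2k)-th iterate. -/
open Polynomial Finset

theorem tri_sum {M : Type*} [AddCommMonoid M] (N : ℕ) (f : ℕ → ℕ → M)
    (hf : ∀ k j, k < N → j < N → N ≤ k + j → f k j = 0) :
    ∑ k ∈ range N, ∑ j ∈ range N, f k j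
      = ∑ m ∈ range N, ∑ k ∈ range (m + 1), f k (m - k) := by
  rw [Finset.sum_sigma', Finset.sum_sigma']
  rw [← Finset.sum_filter_add_sum_filter_not _ (fun x : Σ _ : ℕ, ℕ => x.1 + x.2 < N)]
  have h0 : ∑ x ∈ ((range N).sigma fun _ => range N).filter
      (fun x => ¬ x.1 + x.2 < N), f x.1 x.2 = 0 := by
    apply Finset.sum_eq_zero
    intro x hx
    simp only [mem_filter] at hx
    simp only [mem_sigma, mem_range] at hx
    exact hf x.1 x.2 hx.1.1 hx.1.2 (by omega)
  rw [h0, add_zero]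
  refine Finset.sum_nbij' (fun x => ⟨x.1 + x.2, x.1⟩) (fun x => ⟨x.2, x.1 - x.2⟩) ?_ ?_ ?_ ?_ ?_
  · rintro ⟨k, j⟩ hx
    simp only [mem_filter, mem_sigma, mem_range] at hx ⊢
    omega
  · rintro ⟨m, k⟩ hx
    simp only [mem_filter, mem_sigma, mem_range] at hx ⊢
    omega
  · rintro ⟨k, j⟩ hx
    simp
  · rintro ⟨m, k⟩ hx
    simp only [mem_sigma, mem_range] at hx
    have hk : k + (m - k) = m := by omega
    simp [hk]
  · rintro ⟨k, j⟩ hx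
    simp

/-- The Hermite polynomials `H n (x, s)` of Cigler:
`H_n(x,s) = n! · Σ_{k=0}^{⌊n/2⌋} (-1)^k s^k x^{n-2k} / ((2k)!! (n-2k)!)` with `(2k)!! = 2^k k!`. -/
noncomputable def hermiteCigler (s : ℝ) (n : ℕ) : Polynomial ℝ :=
  ∑ k ∈ Finset.range (n / 2 + 1),
    Polynomial.C ((-1 : ℝ) ^ k * s ^ k * (Nat.factorial n : ℝ) /
        ((2 ^ k * (Nat.factorial k : ℝ)) * (Nat.factorial (n - 2 * k) : ℝ))) *
      Polynomial.X ^ (n - 2 * k)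

/-- Σ_{k=0}^{⌊n/2⌋} (s^k/(2k)!!) · D^{2k} H_n(x,s) = x^n. -/
theorem sum_iterate_deriv_hermiteCigler (s : ℝ) (n : ℕ) :
    ∑ k ∈ Finset.range (n / 2 + 1),
      Polynomial.C (s ^ k / (2 ^ k * (Nat.factorial k : ℝ))) *
        (Polynomial.derivative (R := ℝ))^[2 * k] (hermiteCigler s n) =
      Polynomial.X ^ n := by
  set N := n / 2 + 1 with hN
  set a : ℕ → ℝ := fun j => (-1 : ℝ) ^ j * s ^ j * (Nat.factorial n : ℝ) /
      ((2 ^ j * (Nat.factorial j : ℝ)) * (Nat.factorial (n - 2 * j) : ℝ)) with ha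
  set F : ℕ → ℕ → Polynomial ℝ := fun k j =>
    C (s ^ k / (2 ^ k * (Nat.factorial k : ℝ)) *
        (a j * ((n - 2 * j).descFactorial (2 * k) : ℝ))) * X ^ (n - 2 * j - 2 * k) with hF
  have hD : ∀ k, (Polynomial.derivative (R := ℝ))^[2 * k] (hermiteCigler s n)
      = ∑ j ∈ range N, C (a j * ((n - 2 * j).descFactorial (2 * k) : ℝ)) * X ^ (n - 2 * j - 2 * k) := by
    intro k
    rw [hermiteCigler, Polynomial.iterate_derivative_sum]
    refine Finset.sum_congr rfl fun j hj => ?_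
    rw [Polynomial.iterate_derivative_C_mul, Polynomial.iterate_derivative_X_pow_eq_smul,
      smul_eq_C_mul, ← mul_assoc, ← C_mul]
  have step1 : ∑ k ∈ Finset.range N,
      Polynomial.C (s ^ k / (2 ^ k * (Nat.factorial k : ℝ))) *
        (Polynomial.derivative (R := ℝ))^[2 * k] (hermiteCigler s n)
      = ∑ k ∈ range N, ∑ j ∈ range N, F k j := by
    refine Finset.sum_congr rfl fun k hk => ?_
    rw [hD k, Finset.mul_sum]
    refine Finset.sum_congr rfl fun j hj => ?_
    rw [hF, ← mul_assoc, ← C_mul]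
  rw [step1]
  have hf0 : ∀ k j, k < N → j < N → N ≤ k + j → F k j = 0 := by
    intro k j hk hj h
    have : (n - 2 * j) < 2 * k := by omega
    rw [hF]
    simp only [Nat.descFactorial_eq_zero_iff_lt.mpr this, Nat.cast_zero, mul_zero, map_zero,
      zero_mul]
  rw [tri_sum N F hf0]
  -- inner sums
  have inner : ∀ m ∈ range N, ∑ k ∈ range (m + 1), F k (m - k)
      = C ((0 : ℝ) ^ m) * X ^ (n - 2 * m) := by
    intro m hm
    have hm2 : 2 * m ≤ n := by
      simp only [mem_range, hN] at hm; omega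
    set cst : ℝ := s ^ m * (Nat.factorial n : ℝ) /
        (2 ^ m * (Nat.factorial m : ℝ) * (Nat.factorial (n - 2 * m) : ℝ)) with hcst
    have hterm : ∀ k ∈ range (m + 1), F k (m - k)
        = C ((-1 : ℝ) ^ (m - k) * (m.choose k : ℝ) * cst) * X ^ (n - 2 * m) := by
      intro k hk
      have hkm : k ≤ m := by simp only [mem_range] at hk; omega
      have hexp : n - 2 * (m - k) - 2 * k = n - 2 * m := by omega
      simp only [hF]
      rw [hexp]
      congr 1
      have fne : ∀ x : ℕ, ((Nat.factorial x : ℕ) : ℝ) ≠ 0 :=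
        fun x => Nat.cast_ne_zero.mpr (Nat.factorial_ne_zero x)
      have e1 : ((n - 2 * m).factorial : ℝ) * (((n - 2 * (m - k)).descFactorial (2 * k) : ℕ) : ℝ)
          = ((n - 2 * (m - k)).factorial : ℝ) := by
        have h := Nat.factorial_mul_descFactorial (n := n - 2 * (m - k)) (k := 2 * k) (by omega)
        rw [show n - 2 * (m - k) - 2 * k = n - 2 * m from by omega] at h
        exact_mod_cast congrArg (Nat.cast : ℕ → ℝ) h
      have hd : (((n - 2 * (m - k)).descFactorial (2 * k) : ℕ) : ℝ)
          = ((n - 2 * (m - k)).factorial : ℝ) / ((n - 2 * m).factorial : ℝ) := by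
        rw [eq_div_iff (fne _)]
        linear_combination e1
      have e2 := Nat.choose_mul_factorial_mul_factorial hkm
      have hc : (m.choose k : ℝ) = (m.factorial : ℝ) /
          ((k.factorial : ℝ) * ((m - k).factorial : ℝ)) := by
        rw [eq_div_iff (by positivity)]
        have := congrArg (Nat.cast : ℕ → ℝ) e2
        push_cast at this
        linear_combination this
      have hs : s ^ m = s ^ k * s ^ (m - k) := by
        rw [← pow_add]; congr 1; omega
      have h2 : (2 : ℝ) ^ m = 2 ^ k * 2 ^ (m - k) := by
        rw [← pow_add]; congr 1; omega
      rw [ha, hcst, hd, hc, hs, h2]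
      have f1 := fne k
      have f2 := fne (m - k)
      have f3 := fne (n - 2 * (m - k))
      have f4 := fne (n - 2 * m)
      field_simp
    rw [Finset.sum_congr rfl hterm, ← Finset.sum_mul, ← map_sum]
    have key : ∑ k ∈ range (m + 1), (-1 : ℝ) ^ (m - k) * (m.choose k : ℝ) * cst
        = (0 : ℝ) ^ m * cst := by
      rw [← Finset.sum_mul]
      congr 1
      have h := add_pow (1 : ℝ) (-1) m
      simp only [one_pow, one_mul, add_neg_cancel] at h
      exact h.symm
    rw [key]
    congr 2
    cases m with
    | zero =>
      simp [hcst]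
      exact Nat.factorial_ne_zero n
    | succ m' => simp
  rw [Finset.sum_congr rfl inner]
  rw [Finset.sum_eq_single 0 (by intro m hm hm0; simp [zero_pow hm0]) (by simp [hN])]
  simp
end

section
/- Let 0 < q < 1 and x, s ∈ ℝ. In the ring of formal power series ℝ[[t]], the product (Σ_{k=0}^∞ x^k t^k/{k}_q!)·(Σ_{m=0}^∞ (-1)^m q^{m(m-1)} (s/{2}_q)^m t^{2m}/{m}_{q²}!) equals Σ_{n=0}^∞ (H_n(x,s|q)/{n}_q!)·t^n, where {m}_{q²}! denotes the q²-factorial Π_{l=1}^m (1-q^{2l})/(1-q²). -/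
/-- The q-number `{n}_q = 1 + q + ⋯ + q^{n-1}`. -/
noncomputable def qNum (q : ℝ) (n : ℕ) : ℝ := ∑ k ∈ Finset.range n, q ^ k

/-- The q-factorial `{n}_q! = Π_{k=1}^n {k}_q`. -/
noncomputable def qFact (q : ℝ) (n : ℕ) : ℝ := ∏ k ∈ Finset.range n, qNum q (k + 1)

/-- The even q-double factorial `{2k}_q!! = Π_{l=1}^k {2l}_q`. -/
noncomputable def qDoubleFact (q : ℝ) (k : ℕ) : ℝ := ∏ l ∈ Finset.range k, qNum q (2 * (l + 1))

/-- The q-Hermite number `H_n(x,s|q) = Σ_{k=0}^{⌊n/2⌋} (-1)^k q^{k(k-1)}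
({n}_q!/({n-2k}_q!·{2k}_q!!)) s^k x^{n-2k}`. -/
noncomputable def qHermiteFun (q s x : ℝ) (n : ℕ) : ℝ :=
  ∑ k ∈ Finset.range (n / 2 + 1),
    (-1 : ℝ) ^ k * q ^ (k * (k - 1)) *
      (qFact q n / (qFact q (n - 2 * k) * qDoubleFact q k)) * s ^ k * x ^ (n - 2 * k)

lemma qNum_pos {q : ℝ} (hq : 0 < q) (n : ℕ) : 0 < qNum q (n + 1) := by
  unfold qNum
  exact Finset.sum_pos (fun i _ => pow_pos hq i) ⟨0, by simp⟩

lemma qFact_pos {q : ℝ} (hq : 0 < q) (n : ℕ) : 0 < qFact q n :=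
  Finset.prod_pos fun i _ => qNum_pos hq i

lemma qNum_eq {q : ℝ} (hq : q ≠ 1) (n : ℕ) : qNum q n = (q ^ n - 1) / (q - 1) := by
  unfold qNum
  rw [geom_sum_eq hq]

lemma qNum_two_mul {q : ℝ} (hq0 : 0 < q) (hq1 : q < 1) (j : ℕ) :
    qNum q (2 * j) = qNum q 2 * qNum (q ^ 2) j := by
  have h1 : q ≠ 1 := ne_of_lt hq1
  have h2 : q ^ 2 ≠ 1 := by nlinarith [sq_nonneg q]
  rw [qNum_eq h1, qNum_eq h1, qNum_eq h2, pow_mul]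
  have hq1' : q - 1 ≠ 0 := sub_ne_zero.mpr h1
  have hq2' : q ^ 2 - 1 ≠ 0 := sub_ne_zero.mpr h2
  field_simp

lemma qDoubleFact_eq {q : ℝ} (hq0 : 0 < q) (hq1 : q < 1) (m : ℕ) :
    qDoubleFact q m = qNum q 2 ^ m * qFact (q ^ 2) m := by
  unfold qDoubleFact qFact
  have : ∀ l ∈ Finset.range m, qNum q (2 * (l + 1)) = qNum q 2 * qNum (q ^ 2) (l + 1) :=
    fun l _ => qNum_two_mul hq0 hq1 (l + 1)
  rw [Finset.prod_congr rfl this, Finset.prod_mul_distrib, Finset.prod_const, Finset.card_range]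

lemma sum_even_range (n : ℕ) (f : ℕ → ℝ) (hf : ∀ j, ¬ Even j → f j = 0) :
    ∑ j ∈ Finset.range (n + 1), f j = ∑ m ∈ Finset.range (n / 2 + 1), f (2 * m) := by
  rw [← Finset.sum_filter_of_ne (p := fun j => Even j) (by intro j _ h; by_contra he; exact h (hf j he))]
  refine Finset.sum_nbij' (fun j => j / 2) (fun m => 2 * m) ?_ ?_ ?_ ?_ ?_
  · intro j hj
    simp only [Finset.mem_filter, Finset.mem_range, Nat.lt_succ_iff] at hj ⊢
    exact Nat.div_le_div_right hj.1
  · intro m hm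
    simp only [Finset.mem_filter, Finset.mem_range, Nat.lt_succ_iff] at hm ⊢
    refine ⟨by omega, even_two_mul m⟩
  · intro j hj
    simp only [Finset.mem_filter] at hj
    obtain ⟨_, k, hk⟩ := hj
    omega
  · intro m _
    omega
  · intro j hj
    simp only [Finset.mem_filter] at hj
    obtain ⟨_, k, hk⟩ := hj
    congr 1
    omega

/-- Generating function identity in `ℝ[[t]]`:
`(Σ_k x^k t^k/{k}_q!) · (Σ_m (-1)^m q^{m(m-1)} (s/{2}_q)^m t^{2m}/{m}_{q²}!)
  = Σ_n (H_n(x,s|q)/{n}_q!) t^n`. -/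
theorem qHermite_generating_function (q : ℝ) (hq0 : 0 < q) (hq1 : q < 1) (x s : ℝ) :
    (PowerSeries.mk fun k : ℕ => x ^ k / qFact q k) *
        (PowerSeries.mk fun j : ℕ =>
          if Even j then
            (-1 : ℝ) ^ (j / 2) * q ^ ((j / 2) * (j / 2 - 1)) * (s / qNum q 2) ^ (j / 2) /
              qFact (q ^ 2) (j / 2)
          else 0) =
      PowerSeries.mk fun n : ℕ => qHermiteFun q s x n / qFact q n := by
  have hq2 : 0 < q ^ 2 := pow_pos hq0 2
  have hN2 : qNum q 2 ≠ 0 := ne_of_gt (qNum_pos hq0 1)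
  ext n
  rw [PowerSeries.coeff_mul, Finset.Nat.sum_antidiagonal_eq_sum_range_succ_mk]
  simp only [PowerSeries.coeff_mk]
  -- reflect the sum
  rw [← Finset.sum_range_reflect]
  have step1 : ∀ j ∈ Finset.range (n + 1),
      (x ^ (n + 1 - 1 - j) / qFact q (n + 1 - 1 - j)) *
        (if Even (n - (n + 1 - 1 - j)) then
          (-1 : ℝ) ^ ((n - (n + 1 - 1 - j)) / 2) *
            q ^ (((n - (n + 1 - 1 - j)) / 2) * ((n - (n + 1 - 1 - j)) / 2 - 1)) *
            (s / qNum q 2) ^ ((n - (n + 1 - 1 - j)) / 2) /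
            qFact (q ^ 2) ((n - (n + 1 - 1 - j)) / 2)
        else 0) =
      (x ^ (n - j) / qFact q (n - j)) *
        (if Even j then
          (-1 : ℝ) ^ (j / 2) * q ^ ((j / 2) * (j / 2 - 1)) * (s / qNum q 2) ^ (j / 2) /
            qFact (q ^ 2) (j / 2)
        else 0) := by
    intro j hj
    simp only [Finset.mem_range, Nat.lt_succ_iff] at hj
    have h1 : n + 1 - 1 - j = n - j := by omega
    have h2 : n - (n - j) = j := by omega
    rw [h1, h2]
  rw [Finset.sum_congr rfl step1, sum_even_range n _ (by intro j hje; simp [hje])]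
  rw [show (qHermiteFun q s x n / qFact q n) = ∑ k ∈ Finset.range (n / 2 + 1),
      ((-1 : ℝ) ^ k * q ^ (k * (k - 1)) *
        (qFact q n / (qFact q (n - 2 * k) * qDoubleFact q k)) * s ^ k * x ^ (n - 2 * k)) / qFact q n
    from by rw [qHermiteFun, Finset.sum_div]]
  refine Finset.sum_congr rfl fun m hm => ?_
  have heven : Even (2 * m) := even_two_mul m
  have hdiv : 2 * m / 2 = m := by omega
  rw [if_pos heven, hdiv]
  rw [qDoubleFact_eq hq0 hq1 m, div_pow s]
  have hFn : qFact q n ≠ 0 := ne_of_gt (qFact_pos hq0 n)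
  have hFnm : qFact q (n - 2 * m) ≠ 0 := ne_of_gt (qFact_pos hq0 _)
  have hF2 : qFact (q ^ 2) m ≠ 0 := ne_of_gt (qFact_pos hq2 m)
  field_simp
end

section
/- Let 0 < q < 1 and let α, β be real numbers with α·β² ≠ 0. Then for every n ∈ ℕ, Σ_{k=0}^{n} q^{k(k-1)}·(αβ²)^k/{2k}_q!! = ((αβ²)^n·q^{n(n-1)}/{2n}_q!!)·Σ_{m=0}^{n} (q^{-2n};q²)_m·(-q²/((1-q)·αβ²))^m, where (a;Q)_m = Π_{j=0}^{m-1}(1 - a·Q^j) with (a;Q)_0 = 1. -/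
/-- The q-Pochhammer symbol `(a;Q)_m = Π_{j=0}^{m-1} (1 - a Q^j)`. -/
noncomputable def qPoch (a Q : ℝ) (m : ℕ) : ℝ := ∏ j ∈ Finset.range m, (1 - a * Q ^ j)

/-- For `0 < q < 1` and `αβ² ≠ 0`,
`Σ_{k=0}^n q^{k(k-1)} (αβ²)^k/{2k}_q!! =
  ((αβ²)^n q^{n(n-1)}/{2n}_q!!) · Σ_{m=0}^n (q^{-2n};q²)_m (-q²/((1-q)αβ²))^m`. -/
theorem qL_sum_eq (q : ℝ) (hq0 : 0 < q) (hq1 : q < 1) (α β : ℝ) (h : α * β ^ 2 ≠ 0) (n : ℕ) :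
    ∑ k ∈ Finset.range (n + 1), q ^ (k * (k - 1)) * (α * β ^ 2) ^ k / qDoubleFact q k =
      (α * β ^ 2) ^ n * q ^ (n * (n - 1)) / qDoubleFact q n *
        ∑ m ∈ Finset.range (n + 1),
          qPoch (q ^ (-(2 * (n : ℤ)))) (q ^ 2) m * (-q ^ 2 / ((1 - q) * (α * β ^ 2))) ^ m := by
  set c := α * β ^ 2 with hc
  have hqne : q ≠ 0 := ne_of_gt hq0
  have h1q : (1 : ℝ) - q ≠ 0 := by intro hh; nlinarith
  have hnum : ∀ m : ℕ, qNum q (2 * (m + 1)) ≠ 0 := by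
    intro m
    have : (0:ℝ) < ∑ k ∈ Finset.range (2 * (m + 1)), q ^ k :=
      Finset.sum_pos (fun i _ => pow_pos hq0 i) (by simp)
    simpa [qNum] using this.ne'
  have hD : ∀ k, qDoubleFact q k ≠ 0 := fun k =>
    Finset.prod_ne_zero_iff.mpr fun l _ => hnum l
  have hgeom : ∀ M : ℕ, (1 : ℝ) - q ^ M = (1 - q) * qNum q M := by
    intro M
    rw [qNum]
    have h2 : (∑ i ∈ Finset.range M, q ^ i) * (q - 1) = q ^ M - 1 := geom_sum_mul q M
    linear_combination h2
  have aux : ∀ m : ℕ, m ≤ n →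
      c ^ n * q ^ (n * (n - 1)) / qDoubleFact q n *
        (qPoch (q ^ (-(2 * (n : ℤ)))) (q ^ 2) m * (-q ^ 2 / ((1 - q) * c)) ^ m) =
      q ^ ((n - m) * ((n - m) - 1)) * c ^ (n - m) / qDoubleFact q (n - m) := by
    intro m hm
    induction m with
    | zero => simp only [qPoch, Finset.prod_range_zero, pow_zero, Nat.sub_zero, mul_one]; ring
    | succ m ih =>
      have hm' : m ≤ n := le_of_lt (Nat.lt_of_succ_le hm)
      have ihm := ih hm'
      obtain ⟨j, hj⟩ : ∃ j, n - m = j + 1 := ⟨n - m - 1, by omega⟩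
      have hnm1 : n - (m + 1) = j := by omega
      rw [qPoch, Finset.prod_range_succ, ← qPoch, hnm1]
      have hstep : c ^ n * q ^ (n * (n - 1)) / qDoubleFact q n *
          (qPoch (q ^ (-(2 * (n : ℤ)))) (q ^ 2) m * (1 - q ^ (-(2 * (n : ℤ))) * (q ^ 2) ^ m) *
            (-q ^ 2 / ((1 - q) * c)) ^ (m + 1)) =
          (c ^ n * q ^ (n * (n - 1)) / qDoubleFact q n *
            (qPoch (q ^ (-(2 * (n : ℤ)))) (q ^ 2) m * (-q ^ 2 / ((1 - q) * c)) ^ m)) *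
            ((1 - q ^ (-(2 * (n : ℤ))) * (q ^ 2) ^ m) * (-q ^ 2 / ((1 - q) * c))) := by ring
      rw [hstep, ihm, hj]
      -- now a single step identity with k = j + 1
      have hpow : q ^ (-(2 * (n : ℤ))) * (q ^ 2) ^ m = (q ^ (2 * (j + 1)))⁻¹ := by
        rw [← pow_mul, ← zpow_natCast q (2 * m), ← zpow_add₀ hqne]
        have he : -(2 * (n : ℤ)) + (2 * m : ℕ) = -((2 * (j + 1) : ℕ) : ℤ) := by
          push_cast; omega
        rw [he, zpow_neg, zpow_natCast]
      rw [hpow]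
      have hX : (q : ℝ) ^ (2 * (j + 1)) ≠ 0 := pow_ne_zero _ hqne
      have hone : 1 - ((q : ℝ) ^ (2 * (j + 1)))⁻¹ =
          -((q : ℝ) ^ (2 * (j + 1)))⁻¹ * ((1 - q) * qNum q (2 * (j + 1))) := by
        rw [← hgeom (2 * (j + 1))]
        field_simp
        ring
      rw [hone]
      have hDj : qDoubleFact q (j + 1) = qDoubleFact q j * qNum q (2 * (j + 1)) := by
        rw [qDoubleFact, Finset.prod_range_succ, ← qDoubleFact]
      rw [hDj]
      have hjj : (j + 1) * j = j * (j - 1) + 2 * j := by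
        cases j with
        | zero => rfl
        | succ i => simp [Nat.succ_sub_one]; ring
      have hjj2 : (j + 1) * (j + 1 - 1) = j * (j - 1) + 2 * j := by simpa using hjj
      rw [hjj2]
      have hN := hnum j
      have hDjne := hD j
      field_simp
      ring
  have hR : c ^ n * q ^ (n * (n - 1)) / qDoubleFact q n *
      ∑ m ∈ Finset.range (n + 1),
        qPoch (q ^ (-(2 * (n : ℤ)))) (q ^ 2) m * (-q ^ 2 / ((1 - q) * c)) ^ m =
      ∑ m ∈ Finset.range (n + 1),
        q ^ ((n - m) * ((n - m) - 1)) * c ^ (n - m) / qDoubleFact q (n - m) := by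
    rw [Finset.mul_sum]
    exact Finset.sum_congr rfl fun m hm =>
      aux m (Nat.lt_succ_iff.mp (Finset.mem_range.mp hm))
  rw [hR, ← Finset.sum_range_reflect (fun k => q ^ (k * (k - 1)) * c ^ k / qDoubleFact q k)
    (n + 1)]
  exact Finset.sum_congr rfl fun m _ => by simp only [Nat.add_sub_cancel]
end
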